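/- Let n, m ≥ 3 be odd integers and let G = Dₙ ×_Q Dₘ be a fibre product of the dihedral groups Dₙ and Dₘ over a common quotient Q. Then either G ≅ Dₙ × Dₘ, or G is isomorphic to a generalized dihedral group D(A) where A is a subgroup of Cₙ × Cₘ (a direct product of at most two cyclic groups). -/

import Mathlib

/-- The action of `C₂` on an abelian group `A` by inversion. -/
def C2toAut (A : Type*) [CommGroup A] : Multiplicative (ZMod 2) →* MulAut A :=
  MonoidHom.mk' (fun z => if z = 1 then 1 else MulEquiv.inv A) (by
    have h2 : MulEquiv.inv A * MulEquiv.inv A = 1 := by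
      ext a
      simp
    have hall : ∀ z : Multiplicative (ZMod 2), z = 1 ∨ z = Multiplicative.ofAdd 1 := by decide
    have hg : (Multiplicative.ofAdd (1 : ZMod 2)) ≠ 1 := by decide
    have hgg : (Multiplicative.ofAdd (1 : ZMod 2)) * Multiplicative.ofAdd (1 : ZMod 2) = 1 := by
      decide
    intro x y
    rcases hall x with rfl | rfl <;> rcases hall y with rfl | rfl <;>
      simp [hg, hgg, h2])

open DihedralGroup

private lemma r_pow' {k : ℕ} (y : ZMod k) (j : ℕ) :
    (DihedralGroup.r y) ^ j = DihedralGroup.r ((j : ZMod k) * y) := by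
  induction j with
  | zero => simp
  | succ j ih =>
    rw [pow_succ, ih, r_mul_r]
    push_cast
    ring_nf

private lemma r_pow_self {k : ℕ} (y : ZMod k) : (DihedralGroup.r y) ^ k = 1 := by
  rw [r_pow', ZMod.natCast_self, zero_mul, one_def]

private lemma sr_inv {k : ℕ} (c : ZMod k) : (DihedralGroup.sr c)⁻¹ = DihedralGroup.sr c := by
  symm
  apply eq_inv_of_mul_eq_one_right
  rw [sr_mul_sr, sub_self, one_def]

private lemma sr_sq {k : ℕ} (c : ZMod k) : (DihedralGroup.sr c) ^ 2 = 1 := by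
  rw [sq, sr_mul_sr, sub_self, one_def]

private lemma eq_one_of_sq_of_odd {Q : Type*} [Group Q] {q : Q} {k : ℕ} (hk : Odd k)
    (h2 : q ^ 2 = 1) (hkk : q ^ k = 1) : q = 1 := by
  obtain ⟨j, rfl⟩ := hk
  have : q ^ (2 * j + 1) = (q ^ 2) ^ j * q := by rw [← pow_mul, ← pow_succ]
  rw [this, h2, one_pow, one_mul] at hkk
  exact hkk

private lemma dihedral_trivial_of_sr_eq_one {k : ℕ} (hk : Odd k) {Q : Type*} [Group Q]
    (β : DihedralGroup k →* Q) (b : ZMod k) (hb : β (.sr b) = 1) :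
    ∀ g, β g = 1 := by
  have hr : ∀ y : ZMod k, β (.r y) = 1 := by
    intro y
    have hconj : (DihedralGroup.sr b) * (.r y) * (.sr b) = DihedralGroup.r (-y) := by
      rw [sr_mul_r, sr_mul_sr]
      ring_nf
    have h1 : β (.r (-y)) = β (.r y) := by
      rw [← hconj, map_mul, map_mul, hb, one_mul, mul_one]
    have hinv : (DihedralGroup.r y)⁻¹ = DihedralGroup.r (-y) := by
      symm
      apply eq_inv_of_mul_eq_one_right
      rw [r_mul_r, add_neg_cancel, one_def]
    have h2 : β (.r y) ^ 2 = 1 := by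
      rw [sq]
      nth_rewrite 2 [← h1]
      rw [← hinv, ← map_mul, mul_inv_cancel, map_one]
    have hkk : β (.r y) ^ k = 1 := by
      rw [← map_pow, r_pow_self, map_one]
    exact eq_one_of_sq_of_odd hk h2 hkk
  rintro (y | y)
  · exact hr y
  · have : DihedralGroup.sr y = .sr b * .r (y - b) := by rw [sr_mul_r]; ring_nf
    rw [this, map_mul, hb, one_mul, hr]

/-- The embedding of rotations. -/
private def rotHom (k : ℕ) : Multiplicative (ZMod k) →* DihedralGroup k :=
  MonoidHom.mk' (fun x => .r x.toAdd) (fun a b => by rw [r_mul_r]; rfl)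

private lemma rotHom_apply (k : ℕ) (x : Multiplicative (ZMod k)) :
    rotHom k x = .r x.toAdd := rfl

private lemma r_inv {k : ℕ} (x : ZMod k) : (DihedralGroup.r x)⁻¹ = DihedralGroup.r (-x) := by
  symm
  apply eq_inv_of_mul_eq_one_right
  rw [r_mul_r, add_neg_cancel, one_def]

private lemma sigma_conj {k : ℕ} (c x : ZMod k) :
    DihedralGroup.sr c * .r x * (DihedralGroup.sr c)⁻¹ = (DihedralGroup.r x)⁻¹ := by
  rw [sr_inv, sr_mul_r, sr_mul_sr, r_inv]
  ring_nf

private lemma hall2 : ∀ z : Multiplicative (ZMod 2), z = 1 ∨ z = Multiplicative.ofAdd 1 := by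
  decide

private lemma hne2 : (Multiplicative.ofAdd (1 : ZMod 2)) ≠ 1 := by decide

private lemma hgg2 :
    Multiplicative.ofAdd (1 : ZMod 2) * Multiplicative.ofAdd (1 : ZMod 2) = 1 := by decide

private lemma sigma_sq {n m : ℕ} (b0 : ZMod m) :
    ((DihedralGroup.sr 0, DihedralGroup.sr b0) : DihedralGroup n × DihedralGroup m) *
      (DihedralGroup.sr 0, DihedralGroup.sr b0) = 1 := by
  rw [Prod.mk_mul_mk, sr_mul_sr, sr_mul_sr, sub_self, sub_self]
  rfl


/-- The reflection-valued homomorphism from C₂. -/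
private def f2 (n m : ℕ) (b0 : ZMod m) :
    Multiplicative (ZMod 2) →* DihedralGroup n × DihedralGroup m :=
  MonoidHom.mk' (fun z => if z = 1 then 1 else (.sr 0, .sr b0)) (by
    intro x y
    rcases hall2 x with rfl | rfl <;> rcases hall2 y with rfl | rfl
    · simp
    · simp
    · simp
    · rw [hgg2, if_pos rfl, if_neg hne2, sigma_sq])

private lemma f2_one (n m : ℕ) (b0 : ZMod m) : f2 n m b0 1 = 1 := map_one _

private lemma f2_g (n m : ℕ) (b0 : ZMod m) :
    f2 n m b0 (Multiplicative.ofAdd 1) = (.sr 0, .sr b0) := by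
  show (if (Multiplicative.ofAdd (1 : ZMod 2) : Multiplicative (ZMod 2)) = 1
      then (1 : DihedralGroup n × DihedralGroup m) else (.sr 0, .sr b0)) = (.sr 0, .sr b0)
  rw [if_neg hne2]

private lemma conj_helper (n m : ℕ) (b0 : ZMod m)
    (p : Multiplicative (ZMod n) × Multiplicative (ZMod m)) :
    (((rotHom n).prodMap (rotHom m)) p)⁻¹ =
      ((.sr 0, .sr b0) : DihedralGroup n × DihedralGroup m) *
        ((rotHom n).prodMap (rotHom m)) p *
        (((.sr 0, .sr b0) : DihedralGroup n × DihedralGroup m))⁻¹ := by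
  obtain ⟨x, y⟩ := p
  show ((DihedralGroup.r x.toAdd, DihedralGroup.r y.toAdd) :
      DihedralGroup n × DihedralGroup m)⁻¹ =
    (.sr 0, .sr b0) * (DihedralGroup.r x.toAdd, DihedralGroup.r y.toAdd) * (.sr 0, .sr b0)⁻¹
  rw [Prod.inv_mk, Prod.inv_mk, Prod.mk_mul_mk, Prod.mk_mul_mk, Prod.mk.injEq]
  exact ⟨(sigma_conj _ _).symm, (sigma_conj _ _).symm⟩

/-- The generalized dihedral group `D(A) = A ⋊ C₂`, with `C₂` acting by inversion. -/

abbrev GeneralizedDihedral (A : Type*) [CommGroup A] :=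
  A ⋊[C2toAut A] Multiplicative (ZMod 2)


private lemma compat (n m : ℕ) (b0 : ZMod m)
    (A : Subgroup (Multiplicative (ZMod n) × Multiplicative (ZMod m))) :
    ∀ z, ((((rotHom n).prodMap (rotHom m)).comp A.subtype).comp
        (C2toAut A z).toMonoidHom)
      = (MulAut.conj (f2 n m b0 z)).toMonoidHom.comp
          (((rotHom n).prodMap (rotHom m)).comp A.subtype) := by
  intro z
  rcases hall2 z with rfl | rfl
  · have h1 : C2toAut A 1 = 1 := map_one _
    have h2 : MulAut.conj (f2 n m b0 1) = 1 := by rw [f2_one]; exact map_one _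
    refine MonoidHom.ext fun a => ?_
    simp [h1, h2]
  · have hz : C2toAut A (Multiplicative.ofAdd 1) = MulEquiv.inv A := by
      show (if (Multiplicative.ofAdd (1 : ZMod 2) : Multiplicative (ZMod 2)) = 1
          then (1 : MulAut A) else MulEquiv.inv A) = MulEquiv.inv A
      rw [if_neg hne2]
    refine MonoidHom.ext fun a => ?_
    simp only [MonoidHom.comp_apply, MulEquiv.coe_toMonoidHom, hz, f2_g,
      MulAut.conj_apply, MulEquiv.inv_apply, Subgroup.coe_subtype,
      InvMemClass.coe_inv, map_inv]
    exact conj_helper n m b0 a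

/-- Let `n, m ≥ 3` be odd and let `G = Dₙ ×_Q Dₘ` be a fibre product of the dihedral groups
`Dₙ` and `Dₘ` over a common quotient `Q` (via surjections `α`, `β`). Then either
`G ≅ Dₙ × Dₘ`, or `G` is isomorphic to a generalized dihedral group `D(A)` for some subgroup
`A ≤ Cₙ × Cₘ`. -/
theorem fibre_product_of_odd_dihedrals (n m : ℕ) (hn : Odd n) (hm : Odd m)
    (hn3 : 3 ≤ n) (hm3 : 3 ≤ m) {Q : Type*} [Group Q]
    (α : DihedralGroup n →* Q) (β : DihedralGroup m →* Q)
    (hα : Function.Surjective α) (hβ : Function.Surjective β)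
    (G : Subgroup (DihedralGroup n × DihedralGroup m))
    (hG : ∀ p : DihedralGroup n × DihedralGroup m, p ∈ G ↔ α p.1 = β p.2) :
    Nonempty (G ≃* DihedralGroup n × DihedralGroup m) ∨
    ∃ A : Subgroup (Multiplicative (ZMod n) × Multiplicative (ZMod m)),
      Nonempty (G ≃* GeneralizedDihedral A) := by
  by_cases htop : ∀ q : Q, q = 1
  · left
    have hGtop : G = ⊤ := by
      ext p
      simp only [Subgroup.mem_top, iff_true]
      rw [hG, htop (α p.1), htop (β p.2)]
    exact ⟨(MulEquiv.subgroupCongr hGtop).trans Subgroup.topEquiv⟩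
  · right
    push_neg at htop
    obtain ⟨q0, hq0⟩ := htop
    have hmix1 : ∀ (a : ZMod n) (b : ZMod m), α (.r a) ≠ β (.sr b) := by
      intro a b hab
      have h2 : β (DihedralGroup.sr b) ^ 2 = 1 := by rw [← map_pow, sr_sq, map_one]
      have hkk : β (DihedralGroup.sr b) ^ n = 1 := by
        rw [← hab, ← map_pow, r_pow_self, map_one]
      have hb1 : β (DihedralGroup.sr b) = 1 := eq_one_of_sq_of_odd hn h2 hkk
      have htriv := dihedral_trivial_of_sr_eq_one hm β b hb1
      obtain ⟨g, rfl⟩ := hβ q0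
      exact hq0 (htriv g)
    have hmix2 : ∀ (a : ZMod n) (b : ZMod m), α (.sr a) ≠ β (.r b) := by
      intro a b hab
      have h2 : α (DihedralGroup.sr a) ^ 2 = 1 := by rw [← map_pow, sr_sq, map_one]
      have hkk : α (DihedralGroup.sr a) ^ m = 1 := by
        rw [hab, ← map_pow, r_pow_self, map_one]
      have ha1 : α (DihedralGroup.sr a) = 1 := eq_one_of_sq_of_odd hm h2 hkk
      have htriv := dihedral_trivial_of_sr_eq_one hn α a ha1
      obtain ⟨g, rfl⟩ := hα q0
      exact hq0 (htriv g)
    obtain ⟨g0, hg0⟩ := hβ (α (.sr 0))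
    obtain (b0 | b0) := g0
    · exact absurd hg0.symm (hmix2 0 b0)
    have hσ : α (.sr 0) = β (.sr b0) := hg0.symm
    set ρ : Multiplicative (ZMod n) × Multiplicative (ZMod m) →*
        DihedralGroup n × DihedralGroup m := (rotHom n).prodMap (rotHom m) with hρ
    refine ⟨G.comap ρ, ?_⟩
    set A := G.comap ρ with hA
    have hAmem : ∀ p : Multiplicative (ZMod n) × Multiplicative (ZMod m),
        p ∈ A ↔ α (.r p.1.toAdd) = β (.r p.2.toAdd) := by
      intro p
      rw [hA, Subgroup.mem_comap, hG]
      exact Iff.rfl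
    have hσG : ((.sr 0, .sr b0) : DihedralGroup n × DihedralGroup m) ∈ G := (hG _).mpr hσ
    have hrange : ∀ d : GeneralizedDihedral A,
        SemidirectProduct.lift (ρ.comp A.subtype) (f2 n m b0) (compat n m b0 A) d ∈ G := by
      intro d
      have hval : SemidirectProduct.lift (ρ.comp A.subtype) (f2 n m b0) (compat n m b0 A) d
          = ρ (A.subtype d.left) * f2 n m b0 d.right := rfl
      rw [hval]
      refine mul_mem ?_ ?_
      · exact d.left.2
      · rcases hall2 d.right with h | h
        · rw [h, f2_one]; exact one_mem G
        · rw [h, f2_g]; exact hσG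
    set ψ : GeneralizedDihedral A →* G :=
      (SemidirectProduct.lift (ρ.comp A.subtype) (f2 n m b0) (compat n m b0 A)).codRestrict
        G hrange with hψ
    have hinj : Function.Injective ψ := by
      rw [injective_iff_map_eq_one]
      rintro ⟨⟨⟨x, y⟩, hxy⟩, z⟩ hd
      have hd' : ρ ((x, y) : Multiplicative (ZMod n) × Multiplicative (ZMod m))
          * f2 n m b0 z = 1 := congrArg Subtype.val hd
      rcases hall2 z with rfl | rfl
      · rw [f2_one, mul_one] at hd'
        have hd'' : ((DihedralGroup.r x.toAdd, DihedralGroup.r y.toAdd) :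
            DihedralGroup n × DihedralGroup m) = (DihedralGroup.r 0, DihedralGroup.r 0) := hd'
        rw [Prod.mk.injEq] at hd''
        have hx : x = 1 := by
          have := DihedralGroup.r.inj hd''.1
          exact Multiplicative.toAdd.injective this
        have hy : y = 1 := by
          have := DihedralGroup.r.inj hd''.2
          exact Multiplicative.toAdd.injective this
        subst hx; subst hy
        rfl
      · rw [f2_g] at hd'
        have hd'' : ((DihedralGroup.r x.toAdd, DihedralGroup.r y.toAdd) :
            DihedralGroup n × DihedralGroup m) * (.sr 0, .sr b0)
            = (DihedralGroup.r 0, DihedralGroup.r 0) := hd'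
        rw [Prod.mk_mul_mk, r_mul_sr, Prod.mk.injEq] at hd''
        exact absurd hd''.1 (by intro h; cases h)
    have hsurj : Function.Surjective ψ := by
      rintro ⟨⟨g1, g2⟩, hp⟩
      have hp' := (hG _).mp hp
      rcases g1 with x | x <;> rcases g2 with y | y
      · refine ⟨⟨⟨(Multiplicative.ofAdd x, Multiplicative.ofAdd y),
          (hAmem _).mpr hp'⟩, 1⟩, ?_⟩
        apply Subtype.ext
        show ρ ((Multiplicative.ofAdd x, Multiplicative.ofAdd y)) * f2 n m b0 1 = (.r x, .r y)
        rw [f2_one, mul_one]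
        rfl
      · exact absurd hp' (hmix1 x y)
      · exact absurd hp' (hmix2 x y)
      · have hmem : ((Multiplicative.ofAdd (0 - x), Multiplicative.ofAdd (b0 - y)) :
            Multiplicative (ZMod n) × Multiplicative (ZMod m)) ∈ A := by
          rw [hAmem]
          show α (.r (0 - x)) = β (.r (b0 - y))
          have e1 : DihedralGroup.r (0 - x) = .sr x * .sr 0 := by rw [sr_mul_sr]
          have e2 : DihedralGroup.r (b0 - y) = .sr y * .sr b0 := by rw [sr_mul_sr]
          rw [e1, e2, map_mul, map_mul, hp', hσ]
        refine ⟨⟨⟨(Multiplicative.ofAdd (0 - x), Multiplicative.ofAdd (b0 - y)), hmem⟩,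
          Multiplicative.ofAdd 1⟩, ?_⟩
        apply Subtype.ext
        show ρ ((Multiplicative.ofAdd (0 - x), Multiplicative.ofAdd (b0 - y)))
          * f2 n m b0 (Multiplicative.ofAdd 1) = (.sr x, .sr y)
        rw [f2_g]
        show ((DihedralGroup.r (0 - x), DihedralGroup.r (b0 - y)) :
            DihedralGroup n × DihedralGroup m) * (.sr 0, .sr b0) = (.sr x, .sr y)
        rw [Prod.mk_mul_mk, r_mul_sr, r_mul_sr, Prod.mk.injEq]
        constructor <;> · congr 1; ring
    exact ⟨(MulEquiv.ofBijective ψ ⟨hinj, hsurj⟩).symm⟩
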